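/- If f ∈ ℂ[z_0,z_1,z_2,z_3] is invariant under W (f(sz) = f(z) for all s ∈ W) and f(z) = 0 for every z ∈ ℂ⁴ with z_i = z_j or z_i = −z_j for some i ≠ j, then f is divisible by Δ² in ℂ[z_0,z_1,z_2,z_3], where Δ = ∏_{0≤i<j≤3}(z_i−z_j)(z_i+z_j). -/

import Mathlib

open MvPolynomial

/-- The group `W` of even-signed permutations of coordinates, as a set of matrices:
matrices of the maps `e_i ↦ ε_i e_{s(i)}` with `s ∈ S₄`, `ε_i = ±1`, `ε₀ε₁ε₂ε₃ = 1`. -/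
def SignedPerm : Set (Matrix (Fin 4) (Fin 4) ℂ) :=
  { M | ∃ (s : Equiv.Perm (Fin 4)) (ε : Fin 4 → ℂ),
      (∀ i, ε i = 1 ∨ ε i = -1) ∧ ε 0 * ε 1 * ε 2 * ε 3 = 1 ∧
      ∀ i j, M i j = if i = s j then ε j else 0 }

/-- The polynomial `Δ = ∏_{0 ≤ i < j ≤ 3} (z_i - z_j)(z_i + z_j)`. -/
noncomputable def DeltaPoly : MvPolynomial (Fin 4) ℂ :=
  ∏ i : Fin 4, ∏ j : Fin 4, if i < j then (X i - X j) * (X i + X j) else 1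

namespace DeltaSqAux

/-- The linear form `X a - σ X b`. -/
noncomputable def lform (a b : Fin 4) (σ : ℂ) : MvPolynomial (Fin 4) ℂ := X a - C σ * X b

/-- Substitution `X a ↦ σ X b` as a ring hom. -/
noncomputable def subA (a b : Fin 4) (σ : ℂ) :
    MvPolynomial (Fin 4) ℂ →+* MvPolynomial (Fin 4) ℂ :=
  (bind₁ (fun k => if k = a then C σ * X b else X k)).toRingHom

lemma subA_X (a b : Fin 4) (σ : ℂ) (k : Fin 4) :
    subA a b σ (X k) = if k = a then C σ * X b else X k := by
  simp [subA, bind₁_X_right]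

lemma subA_C (a b : Fin 4) (σ : ℂ) (r : ℂ) : subA a b σ (C r) = C r := by
  simp [subA]

lemma eval_bind1 (w : Fin 4 → MvPolynomial (Fin 4) ℂ) (g : MvPolynomial (Fin 4) ℂ)
    (z : Fin 4 → ℂ) :
    eval z (bind₁ w g) = eval (fun k => eval z (w k)) g := by
  have h := aeval_bind₁ (S := ℂ) z w g
  simpa only [← coe_aeval_eq_eval, RingHom.coe_coe] using h

lemma eval_subA (a b : Fin 4) (σ : ℂ) (g : MvPolynomial (Fin 4) ℂ) (z : Fin 4 → ℂ) :
    eval z (subA a b σ g) = eval (fun k => if k = a then σ * z b else z k) g := by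
  show eval z (bind₁ _ g) = _
  rw [eval_bind1]
  have h2 : (fun k => eval z (if k = a then C σ * X b else X k))
      = fun k => if k = a then σ * z b else z k := by
    funext k; by_cases hk : k = a <;> simp [hk]
  rw [h2]

lemma quot_comp (a b : Fin 4) (hab : a ≠ b) (σ : ℂ) (g : MvPolynomial (Fin 4) ℂ) :
    Ideal.Quotient.mk (Ideal.span {lform a b σ}) (subA a b σ g)
      = Ideal.Quotient.mk (Ideal.span {lform a b σ}) g := by
  have key : (Ideal.Quotient.mk (Ideal.span {lform a b σ})).comp (subA a b σ)
      = Ideal.Quotient.mk (Ideal.span {lform a b σ}) := by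
    apply MvPolynomial.ringHom_ext
    · intro r; simp [subA_C]
    · intro k
      by_cases hk : k = a
      · simp only [RingHom.comp_apply, subA_X, if_pos hk, hk]
        rw [Ideal.Quotient.eq]
        have hmem : lform a b σ ∈ Ideal.span {lform a b σ} :=
          Ideal.subset_span (Set.mem_singleton _)
        have := Ideal.span {lform a b σ} |>.neg_mem hmem
        simpa [lform, neg_sub] using this
      · simp [RingHom.comp_apply, subA_X, hk]
  calc Ideal.Quotient.mk (Ideal.span {lform a b σ}) (subA a b σ g)
      = ((Ideal.Quotient.mk (Ideal.span {lform a b σ})).comp (subA a b σ)) g := rfl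
    _ = _ := by rw [key]

lemma dvd_of_ker (a b : Fin 4) (hab : a ≠ b) (σ : ℂ) (g : MvPolynomial (Fin 4) ℂ)
    (h : subA a b σ g = 0) : lform a b σ ∣ g := by
  rw [← Ideal.mem_span_singleton, ← Ideal.Quotient.eq_zero_iff_mem,
    ← quot_comp a b hab σ g, h, map_zero]

/-- A polynomial vanishing on the hyperplane `z a = σ z b` is divisible by `X a - σ X b`. -/
lemma dvd_of_vanish (a b : Fin 4) (hab : a ≠ b) (σ : ℂ) (g : MvPolynomial (Fin 4) ℂ)
    (hv : ∀ z : Fin 4 → ℂ, z a = σ * z b → eval z g = 0) : lform a b σ ∣ g := by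
  apply dvd_of_ker a b hab σ
  apply MvPolynomial.funext
  intro z
  rw [eval_subA, map_zero]
  apply hv
  simp [hab.symm]

lemma lform_ne_zero (a b : Fin 4) (hab : a ≠ b) (σ : ℂ) : lform a b σ ≠ 0 := by
  intro h
  have := congrArg (eval (fun k => if k = a then (1:ℂ) else 0)) h
  simp [lform, hab.symm] at this

lemma lform_prime (a b : Fin 4) (hab : a ≠ b) (σ : ℂ) : Prime (lform a b σ) := by
  rw [← Ideal.span_singleton_prime (lform_ne_zero a b hab σ)]
  have hker : Ideal.span {lform a b σ} = RingHom.ker (subA a b σ) := by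
    apply le_antisymm
    · rw [Ideal.span_le, Set.singleton_subset_iff]
      show subA a b σ (lform a b σ) = 0
      simp [lform, subA_X, subA_C, hab.symm]
    · intro g hg
      rw [Ideal.mem_span_singleton]
      exact dvd_of_ker a b hab σ g hg
  rw [hker]
  exact RingHom.ker_isPrime _

/-- The signed-swap reflection matrix. -/
def reflM (a b : Fin 4) (σ : ℂ) : Matrix (Fin 4) (Fin 4) ℂ :=
  Matrix.of fun k l =>
    if k = Equiv.swap a b l then (if l = a then σ else if l = b then σ else 1) else 0

lemma refl_mem (a b : Fin 4) (hab : a ≠ b) (σ : ℂ) (hσ1 : σ = 1 ∨ σ = -1) :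
    reflM a b σ ∈ SignedPerm := by
  refine ⟨Equiv.swap a b, fun l => if l = a then σ else if l = b then σ else 1, ?_, ?_, ?_⟩
  · intro i
    dsimp only
    split_ifs <;> first | exact hσ1 | exact Or.inl rfl
  · have hσ2 : σ * σ = 1 := by rcases hσ1 with h | h <;> rw [h] <;> ring
    fin_cases a <;> fin_cases b <;> simp_all
  · intro i j; rfl

lemma refl_mulVec (a b : Fin 4) (σ : ℂ) (z : Fin 4 → ℂ) (k : Fin 4) :
    (reflM a b σ).mulVec z k
      = (if Equiv.swap a b k = a then σ else if Equiv.swap a b k = b then σ else 1)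
          * z (Equiv.swap a b k) := by
  simp only [Matrix.mulVec, dotProduct]
  rw [Finset.sum_eq_single (Equiv.swap a b k)]
  · simp [reflM]
  · intro l _ hl
    have hkl : k ≠ Equiv.swap a b l := by
      intro h
      apply hl
      rw [h, Equiv.swap_apply_self]
    simp [reflM, hkl]
  · simp

/-- The substitution corresponding to the reflection. -/
noncomputable def reflW (a b : Fin 4) (σ : ℂ) : Fin 4 → MvPolynomial (Fin 4) ℂ :=
  fun k => if k = a then C σ * X b else if k = b then C σ * X a else X k

lemma refl_mulVec_eval (a b : Fin 4) (hab : a ≠ b) (σ : ℂ) (z : Fin 4 → ℂ) :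
    (reflM a b σ).mulVec z = fun k => eval z (reflW a b σ k) := by
  funext k
  rw [refl_mulVec]
  by_cases hk : k = a
  · simp [hk, reflW, Equiv.swap_apply_left, hab.symm, hab]
  · by_cases hk' : k = b
    · simp [hk', reflW, Equiv.swap_apply_right, hab.symm, hab]
    · rw [Equiv.swap_apply_of_ne_of_ne hk hk']
      simp [reflW, hk, hk']

/-- The key step: for an invariant polynomial vanishing on the hyperplane,
the square of the linear form divides it. -/
theorem sq_dvd (a b : Fin 4) (hab : a ≠ b) (σ : ℂ) (hσ1 : σ = 1 ∨ σ = -1)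
    (f : MvPolynomial (Fin 4) ℂ)
    (hinv : ∀ M ∈ SignedPerm, ∀ z : Fin 4 → ℂ, eval (M.mulVec z) f = eval z f)
    (hvf : ∀ z : Fin 4 → ℂ, z a = σ * z b → eval z f = 0) :
    lform a b σ ^ 2 ∣ f := by
  have hσ2 : σ * σ = 1 := by rcases hσ1 with h | h <;> rw [h] <;> ring
  have hφf : bind₁ (reflW a b σ) f = f := by
    apply MvPolynomial.funext
    intro z
    rw [eval_bind1, ← refl_mulVec_eval a b hab σ z]
    exact hinv _ (refl_mem a b hab σ hσ1) z
  obtain ⟨h, hf⟩ := dvd_of_vanish a b hab σ f hvf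
  have hC : (C σ : MvPolynomial (Fin 4) ℂ) * C σ = 1 := by rw [← C_mul, hσ2, C_1]
  have hφl : bind₁ (reflW a b σ) (lform a b σ) = - lform a b σ := by
    rw [lform, map_sub, map_mul, bind₁_X_right, bind₁_X_right, bind₁_C_right]
    simp only [reflW, if_pos rfl, if_neg hab.symm, if_true]
    linear_combination (-(X a) : MvPolynomial (Fin 4) ℂ) * hC
  have hφh : bind₁ (reflW a b σ) h = -h := by
    have h0 : lform a b σ * (h + bind₁ (reflW a b σ) h) = 0 := by
      have h1 : bind₁ (reflW a b σ) f = - lform a b σ * bind₁ (reflW a b σ) h := by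
        rw [hf, map_mul, hφl]
      rw [hφf, hf] at h1
      linear_combination h1
    rcases mul_eq_zero.mp h0 with h1 | h1
    · exact absurd h1 (lform_ne_zero a b hab σ)
    · linear_combination h1
  have hhv : ∀ z : Fin 4 → ℂ, z a = σ * z b → eval z h = 0 := by
    intro z hz
    have h1 : eval z (bind₁ (reflW a b σ) h) = eval z h := by
      rw [eval_bind1]
      have h2 : (fun k => eval z (reflW a b σ k)) = z := by
        funext k
        by_cases hk : k = a
        · simp [hk, reflW, ← hz]
        · by_cases hk' : k = b
          · simp only [hk', reflW, if_neg hab.symm, if_pos rfl, if_true, eval_mul, eval_C,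
              eval_X]
            rw [hz, ← mul_assoc, hσ2, one_mul]
          · simp [reflW, hk, hk']
      rw [h2]
    rw [hφh, map_neg] at h1
    linear_combination -h1 / 2
  obtain ⟨g, hg⟩ := dvd_of_vanish a b hab σ h hhv
  exact ⟨g, by rw [hf, hg]; ring⟩

lemma not_dvd_of_witness (a b c d : Fin 4) (σ σ' : ℂ) (z : Fin 4 → ℂ)
    (h1 : z a = σ * z b) (h2 : z c ≠ σ' * z d) : ¬ lform a b σ ∣ lform c d σ' := by
  rintro ⟨g, hg⟩
  apply h2
  have h3 := congrArg (eval z) hg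
  simp only [lform, eval_mul, eval_sub, eval_mul, eval_C, eval_X] at h3
  linear_combination h3 + eval z g * h1

lemma not_dvd_general {a b c d : Fin 4} {σ σ' : ℂ} (hab : a < b) (hcd : c < d)
    (hσ' : σ' = 1 ∨ σ' = -1)
    (hne : a ≠ c ∨ b ≠ d ∨ σ ≠ σ') : ¬ lform a b σ ∣ lform c d σ' := by
  by_cases hc : c ≠ a ∧ c ≠ b
  · refine not_dvd_of_witness a b c d σ σ' (fun k => if k = c then 1 else 0) ?_ ?_
    · simp [hc.1.symm, hc.2.symm, hab.ne, hab.ne']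
    · simp [hcd.ne']
  · by_cases hd : d ≠ a ∧ d ≠ b
    · refine not_dvd_of_witness a b c d σ σ' (fun k => if k = d then 1 else 0) ?_ ?_
      · simp [hd.1.symm, hd.2.symm]
      · simp only [if_pos rfl, if_neg hcd.ne, mul_one]
        rcases hσ' with h | h <;> rw [h] <;> norm_num
    · -- both c and d touch {a,b}; with orderings, c = a and d = b
      push_neg at hc hd
      have hca : c = a := by
        by_contra h
        have hcb := hc h
        have hda : d ≠ a := by
          intro h'
          rw [h'] at hcd
          rw [hcb] at hcd
          exact lt_irrefl a (hab.trans hcd)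
        have hdb := hd hda
        rw [hcb, hdb] at hcd
        exact lt_irrefl b hcd
      have hdb : d = b := by
        by_contra h
        have hda : d = a := by
          by_contra h'
          exact h (hd h')
        rw [hca, hda] at hcd
        exact lt_irrefl a hcd
      have hσ : σ ≠ σ' := by
        rcases hne with h | h | h
        · exact absurd hca.symm h
        · exact absurd hdb.symm h
        · exact h
      rw [hca, hdb]
      refine not_dvd_of_witness a b a b σ σ'
        (fun k => if k = b then 1 else if k = a then σ else 0) ?_ ?_
      · simp [hab.ne, hab.ne']
      · simpa [hab.ne] using hσ

lemma prod_sq_dvd {α : Type*} [CommMonoidWithZero α] [IsCancelMulZero α] :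
    ∀ (L : List α) (f : α), (∀ p ∈ L, Prime p) →
      L.Pairwise (fun p q => ¬p ∣ q ∧ ¬q ∣ p) →
      (∀ p ∈ L, p ^ 2 ∣ f) → (L.map (· ^ 2)).prod ∣ f := by
  intro L
  induction L with
  | nil => intro f _ _ _; simpa using one_dvd f
  | cons p L ih =>
    intro f hprime hpair hdvd
    obtain ⟨g, hg⟩ := hdvd p List.mem_cons_self
    have hpp : Prime p := hprime p List.mem_cons_self
    rw [List.pairwise_cons] at hpair
    have hstep : ∀ q ∈ L, q ^ 2 ∣ g := by
      intro q hq
      have hqp : Prime q := hprime q (List.mem_cons_of_mem p hq)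
      have hqnp : ¬ q ∣ p := (hpair.1 q hq).2
      have hq2 : q ^ 2 ∣ p ^ 2 * g := hg ▸ hdvd q (List.mem_cons_of_mem p hq)
      have hq1 : q ∣ g := by
        have : q ∣ p ^ 2 * g := dvd_trans (dvd_pow_self q (by norm_num)) hq2
        rcases hqp.dvd_or_dvd this with h | h
        · rcases hqp.dvd_or_dvd (by rwa [sq] at h) with h' | h' <;> exact absurd h' hqnp
        · exact h
      obtain ⟨g', hg'⟩ := hq1
      have hq3 : q ∣ p ^ 2 * g' := by
        have h4 : q * (p ^ 2 * g') = p ^ 2 * g := by rw [hg', mul_left_comm]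
        have h5 : q * q ∣ q * (p ^ 2 * g') := by rw [h4, ← sq]; exact hq2
        exact (mul_dvd_mul_iff_left hqp.ne_zero).mp h5
      have hq4 : q ∣ g' := by
        rcases hqp.dvd_or_dvd hq3 with h | h
        · rcases hqp.dvd_or_dvd (by rwa [sq] at h) with h' | h' <;> exact absurd h' hqnp
        · exact h
      obtain ⟨g'', hg''⟩ := hq4
      exact ⟨g'', by rw [hg', hg'', ← mul_assoc, ← sq]⟩
    have := ih g (fun q hq => hprime q (List.mem_cons_of_mem p hq)) hpair.2 hstep
    obtain ⟨t, ht⟩ := this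
    exact ⟨t, by rw [List.map_cons, List.prod_cons, hg, ht, mul_assoc]⟩

/-- The 12 linear forms whose product is `Δ`. -/
noncomputable def Lforms : List (MvPolynomial (Fin 4) ℂ) :=
  [lform 0 1 1, lform 0 1 (-1), lform 0 2 1, lform 0 2 (-1), lform 0 3 1, lform 0 3 (-1),
   lform 1 2 1, lform 1 2 (-1), lform 1 3 1, lform 1 3 (-1), lform 2 3 1, lform 2 3 (-1)]

lemma delta_eq : DeltaPoly = Lforms.prod := by
  have hC1 : (C (1:ℂ) : MvPolynomial (Fin 4) ℂ) = 1 := C_1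
  have hCm : (C (-1:ℂ) : MvPolynomial (Fin 4) ℂ) = -1 := by
    rw [map_neg, C_1]
  rw [DeltaPoly, Fin.prod_univ_four]
  rw [Fin.prod_univ_four, Fin.prod_univ_four, Fin.prod_univ_four, Fin.prod_univ_four]
  have h : ∀ (p q : MvPolynomial (Fin 4) ℂ) (i j : Fin 4), i < j →
      (if i < j then p else q) = p := fun p q i j hij => if_pos hij
  have h' : ∀ (p q : MvPolynomial (Fin 4) ℂ) (i j : Fin 4), ¬ i < j →
      (if i < j then p else q) = q := fun p q i j hij => if_neg hij
  rw [h _ _ 0 1 (by decide), h _ _ 0 2 (by decide), h _ _ 0 3 (by decide),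
    h _ _ 1 2 (by decide), h _ _ 1 3 (by decide), h _ _ 2 3 (by decide),
    h' _ _ 0 0 (by decide), h' _ _ 1 0 (by decide), h' _ _ 1 1 (by decide),
    h' _ _ 2 0 (by decide), h' _ _ 2 1 (by decide), h' _ _ 2 2 (by decide),
    h' _ _ 3 0 (by decide), h' _ _ 3 1 (by decide), h' _ _ 3 2 (by decide),
    h' _ _ 3 3 (by decide)]
  simp only [Lforms, lform, List.prod_cons, List.prod_nil, hC1, hCm, one_mul, neg_one_mul,
    sub_neg_eq_add, mul_one]
  ring

lemma prod_map_sq {α : Type*} [CommMonoid α] (L : List α) :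
    (L.map (· ^ 2)).prod = L.prod ^ 2 := by
  induction L with
  | nil => simp
  | cons a L ih => simp [ih, mul_pow]

lemma van_apply (f : MvPolynomial (Fin 4) ℂ)
    (hvan : ∀ z : Fin 4 → ℂ, (∃ i j : Fin 4, i ≠ j ∧ (z i = z j ∨ z i = -z j)) →
      eval z f = 0)
    (a b : Fin 4) (hab : a ≠ b) (σ : ℂ) (hσ : σ = 1 ∨ σ = -1) :
    ∀ z : Fin 4 → ℂ, z a = σ * z b → eval z f = 0 := by
  intro z hz
  apply hvan z
  refine ⟨a, b, hab, ?_⟩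
  rcases hσ with h | h
  · left; rw [hz, h, one_mul]
  · right; rw [hz, h]; ring

end DeltaSqAux

open DeltaSqAux in
/-- If `f` is `W`-invariant and vanishes on `{z : z_i = ±z_j for some i ≠ j}`,
then `Δ²` divides `f`. -/
theorem invariant_vanishing_divisible_by_Delta_sq
    (f : MvPolynomial (Fin 4) ℂ)
    (hinv : ∀ M ∈ SignedPerm, ∀ z : Fin 4 → ℂ, eval (M.mulVec z) f = eval z f)
    (hvan : ∀ z : Fin 4 → ℂ, (∃ i j : Fin 4, i ≠ j ∧ (z i = z j ∨ z i = -z j)) →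
      eval z f = 0) :
    DeltaPoly ^ 2 ∣ f := by
  have hprime : ∀ p ∈ Lforms, Prime p := by
    intro p hp
    simp only [Lforms, List.mem_cons, List.not_mem_nil, or_false] at hp
    rcases hp with rfl | rfl | rfl | rfl | rfl | rfl | rfl | rfl | rfl | rfl | rfl | rfl <;>
      exact lform_prime _ _ (by decide) _
  have hpair : Lforms.Pairwise (fun p q => ¬p ∣ q ∧ ¬q ∣ p) := by
    rw [List.pairwise_iff_get]
    intro i j hij
    fin_cases i <;> fin_cases j <;>
      first
        | exact absurd hij (by decide)
        | (refine ⟨not_dvd_general (by decide) (by decide) ?_ ?_,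
              not_dvd_general (by decide) (by decide) ?_ ?_⟩ <;>
            first
              | exact Or.inl rfl
              | exact Or.inr rfl
              | exact Or.inl (by decide)
              | exact Or.inr (Or.inl (by decide))
              | exact Or.inr (Or.inr (by norm_num)))
  have hdvd : ∀ p ∈ Lforms, p ^ 2 ∣ f := by
    intro p hp
    simp only [Lforms, List.mem_cons, List.not_mem_nil, or_false] at hp
    rcases hp with rfl | rfl | rfl | rfl | rfl | rfl | rfl | rfl | rfl | rfl | rfl | rfl <;>
      exact sq_dvd _ _ (by decide) _
        (by first | exact Or.inl rfl | exact Or.inr rfl) f hinv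
        (van_apply f hvan _ _ (by decide) _
          (by first | exact Or.inl rfl | exact Or.inr rfl))
  have h1 : (Lforms.map (· ^ 2)).prod ∣ f := prod_sq_dvd Lforms f hprime hpair hdvd
  rwa [prod_map_sq, ← delta_eq] at h1
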